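/- For m ≥ 1, the AA(m) coefficient map β(z) = -R(z)† r(z_{m+1}) is not continuous at the fixed point z* = (x*, …, x*): along perturbations d(ε) = (ε d₁, ε d₂, ε d₁, …, ε d₁) one has β(z* + d(ε)) = (Δ(ε), 0, …, 0) with lim_{ε→0} Δ(ε) = 0 when d₁ = d₂ or d₁ = 0, but lim_{ε→0} Δ(ε) = -1 when d₂ = 0 and d₁ ≠ 0; hence the limit depends on the direction. -/

import Mathlib

open scoped Topology
open Filter Matrix

noncomputable section

/-- The four Penrose conditions: `P` is the Moore–Penrose pseudo-inverse of `B`. -/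
def IsMoorePenrose {k l : ℕ} (B : Matrix (Fin k) (Fin l) ℝ)
    (P : Matrix (Fin l) (Fin k) ℝ) : Prop :=
  B * P * B = B ∧ P * B * P = P ∧ (B * P)ᵀ = B * P ∧ (P * B)ᵀ = P * B

open Classical in
/-- The Moore–Penrose pseudo-inverse `B†` (the unique matrix satisfying the Penrose
conditions; it always exists for real matrices). -/
def pinv {k l : ℕ} (B : Matrix (Fin k) (Fin l) ℝ) : Matrix (Fin l) (Fin k) ℝ :=
  if h : ∃ P, IsMoorePenrose B P then h.choose else 0

/-- Spectral (operator) norm of a matrix, as the operator norm of the induced map on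
Euclidean spaces. -/
def specNorm {k l : ℕ} (B : Matrix (Fin k) (Fin l) ℝ) : ℝ :=
  ‖LinearMap.toContinuousLinearMap (Matrix.toEuclideanLin B)‖

/-- Difference matrix `D(z) = [z_{m+1}-z_m, …, z_{m+1}-z₁]`; blocks are indexed so that
`z j` is the paper's `z_{j+1}`, i.e. `z (Fin.last m)` is `z_{m+1}`, and column `j`
(`j = 0, …, m-1`) is `z_{m+1} - z_{m-j}`. -/
def Dmat {n m : ℕ} (z : Fin (m + 1) → Fin n → ℝ) : Matrix (Fin n) (Fin m) ℝ :=
  Matrix.of fun i j => (z (Fin.last m) - z (Fin.rev j.succ)) i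

/-- Residual difference matrix `R(z) = [r(z_{m+1})-r(z_m), …, r(z_{m+1})-r(z₁)]`. -/
def Rmat {n m : ℕ} (r : (Fin n → ℝ) → Fin n → ℝ) (z : Fin (m + 1) → Fin n → ℝ) :
    Matrix (Fin n) (Fin m) ℝ :=
  Matrix.of fun i j => (r (z (Fin.last m)) - r (z (Fin.rev j.succ))) i

/-- Iterate difference matrix `Q(z) = [q(z_{m+1})-q(z_m), …, q(z_{m+1})-q(z₁)]`. -/
def Qmat {n m : ℕ} (q : (Fin n → ℝ) → Fin n → ℝ) (z : Fin (m + 1) → Fin n → ℝ) :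
    Matrix (Fin n) (Fin m) ℝ :=
  Matrix.of fun i j => (q (z (Fin.last m)) - q (z (Fin.rev j.succ))) i

/-- AA(m) coefficient vector `β(z) = -R(z)† r(z_{m+1})`. -/
def betaF {n m : ℕ} (r : (Fin n → ℝ) → Fin n → ℝ) (z : Fin (m + 1) → Fin n → ℝ) :
    Fin m → ℝ :=
  -(pinv (Rmat r z)).mulVec (r (z (Fin.last m)))

/-- AA(m) iteration map `Ψ(z) = (q(z_{m+1}) + Q(z)β(z), z_{m+1}, z_m, …, z₂)`. -/
def PsiM {n m : ℕ} (q : (Fin n → ℝ) → Fin n → ℝ) (z : Fin (m + 1) → Fin n → ℝ) :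
    Fin (m + 1) → Fin n → ℝ :=
  fun i => Fin.lastCases
    (q (z (Fin.last m)) + (Qmat q z).mulVec (betaF (fun x => x - q x) z))
    (fun j : Fin m => z j.succ) i

/-- Euclidean norm on `ℝ^{n(m+1)}` viewed as block vectors. -/
def enormV {n m : ℕ} (v : Fin (m + 1) → Fin n → ℝ) : ℝ :=
  Real.sqrt (∑ i, ∑ j, v i j ^ 2)

/-- The Penrose conditions determine the pseudo-inverse uniquely. -/
lemma isMP_unique {k l : ℕ} {B : Matrix (Fin k) (Fin l) ℝ} {P₁ P₂ : Matrix (Fin l) (Fin k) ℝ}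
    (h₁ : IsMoorePenrose B P₁) (h₂ : IsMoorePenrose B P₂) : P₁ = P₂ := by
  obtain ⟨a1, b1, c1, d1⟩ := h₁
  obtain ⟨a2, b2, c2, d2⟩ := h₂
  have hBP : B * P₁ = B * P₂ := by
    calc B * P₁ = (B * P₂ * B) * P₁ := by rw [a2]
    _ = (B * P₂) * (B * P₁) := by rw [Matrix.mul_assoc]
    _ = (B * P₂)ᵀ * (B * P₁)ᵀ := by rw [c1, c2]
    _ = ((B * P₁) * (B * P₂))ᵀ := by
        rw [Matrix.transpose_mul]; simp only [Matrix.transpose_mul]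
    _ = ((B * P₁ * B) * P₂)ᵀ := by simp only [Matrix.mul_assoc]
    _ = (B * P₂)ᵀ := by rw [a1]
    _ = B * P₂ := c2
  have hPB : P₁ * B = P₂ * B := by
    calc P₁ * B = P₁ * (B * P₂ * B) := by rw [a2]
    _ = (P₁ * B) * (P₂ * B) := by simp only [Matrix.mul_assoc]
    _ = (P₁ * B)ᵀ * (P₂ * B)ᵀ := by rw [d1, d2]
    _ = ((P₂ * B) * (P₁ * B))ᵀ := by
        rw [Matrix.transpose_mul]; simp only [Matrix.transpose_mul]
    _ = ((P₂ * (B * P₁ * B)))ᵀ := by simp only [Matrix.mul_assoc]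
    _ = (P₂ * B)ᵀ := by rw [a1]
    _ = P₂ * B := d2
  calc P₁ = P₁ * B * P₁ := b1.symm
  _ = P₁ * (B * P₁) := by rw [Matrix.mul_assoc]
  _ = P₁ * (B * P₂) := by rw [hBP]
  _ = (P₁ * B) * P₂ := by rw [Matrix.mul_assoc]
  _ = (P₂ * B) * P₂ := by rw [hPB]
  _ = P₂ := b2

lemma pinv_eq {k l : ℕ} {B : Matrix (Fin k) (Fin l) ℝ} {P : Matrix (Fin l) (Fin k) ℝ}
    (h : IsMoorePenrose B P) : pinv B = P := by
  have hex : ∃ P', IsMoorePenrose B P' := ⟨P, h⟩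
  rw [pinv, dif_pos hex]
  exact isMP_unique hex.choose_spec h

lemma pinv_zero {k l : ℕ} : pinv (0 : Matrix (Fin k) (Fin l) ℝ) = 0 :=
  pinv_eq (by simp [IsMoorePenrose])

/-- Pseudo-inverse of a matrix whose only (possibly) nonzero column is column `0`. -/
lemma pinv_col {n m : ℕ} (hm : 0 < m) (c : Fin n → ℝ) :
    pinv (Matrix.of fun i (j : Fin m) => if j = ⟨0, hm⟩ then c i else 0) =
    Matrix.of fun (j : Fin m) i => if j = ⟨0, hm⟩ then c i / (∑ k, c k ^ 2) else 0 := by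
  by_cases hc : c = 0
  · subst hc
    have h1 : (Matrix.of fun i (j : Fin m) => if j = ⟨0, hm⟩ then (0 : Fin n → ℝ) i else 0)
        = (0 : Matrix (Fin n) (Fin m) ℝ) := by ext i j; simp
    rw [h1, pinv_zero]; ext j i; simp
  · set s : ℝ := ∑ k, c k ^ 2 with hs
    obtain ⟨i₀, hi₀⟩ : ∃ i, c i ≠ 0 := by
      by_contra h; push_neg at h; exact hc (funext h)
    have hspos : 0 < s := by
      have h1 : c i₀ ^ 2 ≤ s :=
        Finset.single_le_sum (fun i _ => sq_nonneg (c i)) (Finset.mem_univ i₀)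
      nlinarith [pow_pos (abs_pos.mpr hi₀) 2, sq_abs (c i₀)]
    have hsne : s ≠ 0 := ne_of_gt hspos
    have hsum : ∀ a : ℝ, ∑ x, a * c x * c x / s = a := by
      intro a
      rw [← Finset.sum_div]
      simp_rw [mul_assoc, ← sq]
      rw [← Finset.mul_sum, ← hs]
      field_simp
    apply pinv_eq
    refine ⟨?_, ?_, ?_, ?_⟩
    · ext i j
      simp only [Matrix.mul_apply, Matrix.of_apply, ite_mul, mul_ite, zero_mul, mul_zero,
        Finset.sum_ite_eq', Finset.mem_univ, if_true]
      split
      · conv_rhs => rw [← hsum (c i)]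
        exact Finset.sum_congr rfl fun x _ => by ring
      · simp
    · ext j i
      simp only [Matrix.mul_apply, Matrix.of_apply, ite_mul, mul_ite, zero_mul, mul_zero,
        Finset.sum_ite_eq', Finset.mem_univ, if_true]
      have h1 : ∑ x, c x / s * c x = 1 := by
        conv_rhs => rw [← hsum 1]
        exact Finset.sum_congr rfl fun x _ => by ring
      by_cases h2 : j = ⟨0, hm⟩ <;> simp [h2, h1]
    · ext i i'
      simp only [Matrix.transpose_apply, Matrix.mul_apply, Matrix.of_apply, ite_mul, mul_ite,
        zero_mul, mul_zero, Finset.sum_ite_eq', Finset.mem_univ, if_true]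
      ring
    · ext j j'
      simp only [Matrix.transpose_apply, Matrix.mul_apply, Matrix.of_apply, ite_mul, mul_ite,
        zero_mul, mul_zero, Finset.sum_ite_eq', Finset.mem_univ, if_true]
      by_cases h1 : j = ⟨0, hm⟩ <;> by_cases h2 : j' = ⟨0, hm⟩ <;> simp [h1, h2]

lemma pinv_col_mulVec {n m : ℕ} (hm : 0 < m) (c a : Fin n → ℝ) :
    (pinv (Matrix.of fun i (j : Fin m) => if j = ⟨0, hm⟩ then c i else 0)).mulVec a =
    fun j => if j = ⟨0, hm⟩ then (∑ i, c i * a i) / (∑ k, c k ^ 2) else 0 := by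
  rw [pinv_col hm c]
  funext j
  simp only [Matrix.mulVec, dotProduct, Matrix.of_apply, ite_mul, zero_mul]
  split
  · simp_rw [div_mul_eq_mul_div]; rw [← Finset.sum_div]
  · simp

/-- for `m ≥ 1`, `β` is not continuous at `z* = (x*,…,x*)`. Along the
perturbations `d(ε) = (εd₁, εd₂, εd₁, …, εd₁)` (block `z_m` gets `εd₂`, all others `εd₁`),
`β(z* + d(ε))` has all components zero except the first one `Δ(ε)`, with
`Δ(ε) → 0` when `d₁ = d₂` or `d₁ = 0`, but `Δ(ε) → -1` when `d₂ = 0` and `d₁ ≠ 0`. -/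
theorem stmt12 {n m : ℕ} (hn : 0 < n) (hm : 0 < m)
    (q : (Fin n → ℝ) → Fin n → ℝ) (hq : ContDiff ℝ 1 q)
    (xs : Fin n → ℝ) (hfix : q xs = xs)
    (hA : Function.Bijective (fderiv ℝ (fun x => x - q x) xs))
    (zpert : (Fin n → ℝ) → (Fin n → ℝ) → ℝ → Fin (m + 1) → Fin n → ℝ)
    (hz : zpert = fun d₁ d₂ ε i => xs + ε • (if i.val = m - 1 then d₂ else d₁)) :
    (∀ (d₁ d₂ : Fin n → ℝ) (ε : ℝ) (j : Fin m), j ≠ ⟨0, hm⟩ →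
      betaF (fun x => x - q x) (zpert d₁ d₂ ε) j = 0) ∧
    (∀ d₁ d₂ : Fin n → ℝ, d₁ = d₂ ∨ d₁ = 0 →
      Tendsto (fun ε : ℝ => betaF (fun x => x - q x) (zpert d₁ d₂ ε) ⟨0, hm⟩)
        (𝓝[≠] 0) (𝓝 0)) ∧
    (∀ d₁ : Fin n → ℝ, d₁ ≠ 0 →
      Tendsto (fun ε : ℝ => betaF (fun x => x - q x) (zpert d₁ 0 ε) ⟨0, hm⟩)
        (𝓝[≠] 0) (𝓝 (-1))) ∧
    ¬ ContinuousAt (betaF (m := m) (fun x => x - q x)) (fun _ : Fin (m + 1) => xs) := by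
  set r : (Fin n → ℝ) → Fin n → ℝ := fun x => x - q x with hrdef
  have hrxs : r xs = 0 := by simp [hrdef, hfix]
  -- the residual matrix along the perturbation has a single nonzero column
  have hR : ∀ (d₁ d₂ : Fin n → ℝ) (ε : ℝ),
      Rmat r (zpert d₁ d₂ ε) =
      Matrix.of fun i (j : Fin m) =>
        if j = ⟨0, hm⟩ then (r (xs + ε • d₁) i - r (xs + ε • d₂) i) else 0 := by
    intro d₁ d₂ ε
    ext i j
    have h1 : ((j.succ : Fin (m + 1)).rev).val = m - 1 - j.val := by
      rw [Fin.val_rev, Fin.val_succ]; omega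
    have h2 : (m - 1 - j.val = m - 1) ↔ j = ⟨0, hm⟩ := by
      simp [Fin.ext_iff]; have := j.isLt; omega
    simp only [Rmat, Matrix.of_apply, Pi.sub_apply, hz, Fin.val_last, h1]
    rw [if_neg (by omega : ¬ (m = m - 1))]
    by_cases h3 : j = ⟨0, hm⟩
    · rw [if_pos (h2.mpr h3), if_pos h3]
    · rw [if_neg (fun hh => h3 (h2.mp hh)), if_neg h3]; ring
  have hlast : ∀ (d₁ d₂ : Fin n → ℝ) (ε : ℝ),
      zpert d₁ d₂ ε (Fin.last m) = xs + ε • d₁ := by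
    intro d₁ d₂ ε
    simp only [hz, Fin.val_last]
    rw [if_neg (by omega : ¬ (m = m - 1))]
  -- the key closed-form formula for β along the perturbation
  have hbeta : ∀ (d₁ d₂ : Fin n → ℝ) (ε : ℝ) (j : Fin m),
      betaF r (zpert d₁ d₂ ε) j =
      if j = ⟨0, hm⟩ then
        -((∑ i, (r (xs + ε • d₁) i - r (xs + ε • d₂) i) * r (xs + ε • d₁) i) /
          (∑ k, (r (xs + ε • d₁) k - r (xs + ε • d₂) k) ^ 2))
      else 0 := by
    intro d₁ d₂ ε j
    rw [betaF, hR, hlast,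
      pinv_col_mulVec hm (fun i => r (xs + ε • d₁) i - r (xs + ε • d₂) i) (r (xs + ε • d₁))]
    by_cases h3 : j = ⟨0, hm⟩ <;> simp [h3]
  -- Part 1
  have part1 : ∀ (d₁ d₂ : Fin n → ℝ) (ε : ℝ) (j : Fin m), j ≠ ⟨0, hm⟩ →
      betaF r (zpert d₁ d₂ ε) j = 0 := by
    intro d₁ d₂ ε j hj
    rw [hbeta, if_neg hj]
  -- Part 2
  have part2 : ∀ d₁ d₂ : Fin n → ℝ, d₁ = d₂ ∨ d₁ = 0 →
      Tendsto (fun ε : ℝ => betaF r (zpert d₁ d₂ ε) ⟨0, hm⟩) (𝓝[≠] (0:ℝ)) (𝓝 0) := by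
    intro d₁ d₂ hcase
    have h0 : ∀ ε : ℝ, betaF r (zpert d₁ d₂ ε) ⟨0, hm⟩ = 0 := by
      intro ε
      rw [hbeta, if_pos rfl]
      rcases hcase with h | h
      · subst h; simp
      · subst h
        have hx : xs + ε • (0 : Fin n → ℝ) = xs := by simp
        simp [hx, hrxs]
    exact Tendsto.congr (fun ε => (h0 ε).symm) tendsto_const_nhds
  -- Part 3
  have part3 : ∀ d₁ : Fin n → ℝ, d₁ ≠ 0 →
      Tendsto (fun ε : ℝ => betaF r (zpert d₁ 0 ε) ⟨0, hm⟩) (𝓝[≠] (0:ℝ)) (𝓝 (-1)) := by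
    intro d₁ hd₁
    have hrdiff : Differentiable ℝ r := by
      rw [hrdef]; exact differentiable_id.sub (hq.differentiable one_ne_zero)
    set A := fderiv ℝ r xs with hAdef
    have hv : A d₁ ≠ 0 := by
      intro h
      exact hd₁ (hA.injective (by simpa using h))
    have hg : HasDerivAt (fun ε : ℝ => r (xs + ε • d₁)) (A d₁) 0 := by
      have h1 : HasDerivAt (fun ε : ℝ => xs + ε • d₁) d₁ 0 := by
        simpa using ((hasDerivAt_id (0:ℝ)).smul_const d₁).const_add xs
      have h2 : HasFDerivAt r A (xs + (0:ℝ) • d₁) := by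
        simpa using (hrdiff xs).hasFDerivAt
      exact h2.comp_hasDerivAt 0 h1
    have hne : ∀ᶠ ε in 𝓝[≠] (0:ℝ), r (xs + ε • d₁) ≠ 0 := by
      rw [hasDerivAt_iff_isLittleO] at hg
      have hvpos : 0 < ‖A d₁‖ := norm_pos_iff.mpr hv
      have h3 := hg.def (half_pos hvpos)
      refine Filter.eventually_inf_principal.mpr ((h3.mono ?_))
      intro ε hε hεne hzero
      simp only [Set.mem_compl_iff, Set.mem_singleton_iff] at hεne
      rw [hzero] at hε
      have hr0 : r (xs + (0:ℝ) • d₁) = 0 := by simpa using hrxs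
      rw [hr0] at hε
      simp only [zero_sub, sub_zero, zero_smul, neg_sub, norm_neg, norm_smul,
        Real.norm_eq_abs] at hε
      have habs : 0 < |ε| := abs_pos.mpr hεne
      have : |ε| * ‖A d₁‖ ≤ ‖A d₁‖ / 2 * |ε| := by simpa [norm_smul] using hε
      nlinarith
    have hval : ∀ᶠ ε in 𝓝[≠] (0:ℝ), betaF r (zpert d₁ 0 ε) ⟨0, hm⟩ = -1 := by
      filter_upwards [hne] with ε hεne
      rw [hbeta, if_pos rfl]
      have hx : xs + ε • (0 : Fin n → ℝ) = xs := by simp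
      rw [hx, hrxs]
      set a : Fin n → ℝ := r (xs + ε • d₁) with hadef
      obtain ⟨i₀, hi₀⟩ : ∃ i, a i ≠ 0 := by
        by_contra h; push_neg at h; exact hεne (funext h)
      have hspos : 0 < ∑ k, a k ^ 2 := by
        have h1 : a i₀ ^ 2 ≤ ∑ k, a k ^ 2 :=
          Finset.single_le_sum (fun i _ => sq_nonneg (a i)) (Finset.mem_univ i₀)
        nlinarith [pow_pos (abs_pos.mpr hi₀) 2, sq_abs (a i₀)]
      have hnum : ∑ i, (a i - (0:Fin n → ℝ) i) * a i = ∑ k, (a k - (0:Fin n → ℝ) k) ^ 2 := by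
        refine Finset.sum_congr rfl fun i _ => by simp [sq]
      rw [hnum]
      have hden : (∑ k, (a k - (0:Fin n → ℝ) k) ^ 2) = ∑ k, a k ^ 2 := by
        refine Finset.sum_congr rfl fun i _ => by simp
      rw [hden, div_self (ne_of_gt hspos)]
    exact Tendsto.congr' (hval.mono fun ε h => h.symm) tendsto_const_nhds
  -- Part 4
  refine ⟨part1, part2, part3, ?_⟩
  intro hcont
  set d₁ : Fin n → ℝ := fun _ => 1 with hd1def
  have hd₁ : d₁ ≠ 0 := by
    intro h
    have := congrFun h ⟨0, hn⟩
    simp [hd1def] at this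
  have h3 := part3 d₁ hd₁
  have hzstar : Tendsto (fun ε : ℝ => zpert d₁ 0 ε) (𝓝[≠] (0:ℝ))
      (𝓝 (fun _ : Fin (m + 1) => xs)) := by
    have hc : Continuous (fun ε : ℝ => zpert d₁ 0 ε) := by
      rw [hz]
      exact continuous_pi fun i => continuous_const.add (continuous_id.smul continuous_const)
    have h4 := hc.tendsto 0
    have h5 : zpert d₁ 0 0 = fun _ : Fin (m + 1) => xs := by
      funext i; simp [hz]
    rw [h5] at h4
    exact h4.mono_left nhdsWithin_le_nhds
  have hβ0 : betaF r (fun _ : Fin (m + 1) => xs) ⟨0, hm⟩ = 0 := by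
    have h0 : (fun _ : Fin (m + 1) => xs) = zpert d₁ 0 0 := by
      funext i; simp [hz]
    rw [h0, hbeta, if_pos rfl]
    simp
  have hcomp : Tendsto (fun ε : ℝ => betaF r (zpert d₁ 0 ε) ⟨0, hm⟩) (𝓝[≠] (0:ℝ)) (𝓝 0) := by
    have h6 := ((continuous_apply (⟨0, hm⟩ : Fin m)).tendsto _).comp (hcont.tendsto.comp hzstar)
    rw [hβ0] at h6
    exact h6
  have := tendsto_nhds_unique h3 hcomp
  norm_num at this
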